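/- arXiv:2511.03323 — 2 statements merged into one kernel-verified Lean document; each statement's English description precedes it below -/
import Mathlib

section
/- Suppose nr = (q^m−1)/s for positive integers m and s, and suppose {l_i : i ∈ Z_{n,r}} = {l, m} for a positive integer l with l < m and l ∣ m. If N_l > 1, then 2(q−1)·δ^{(l)}_{⌊N_l/2⌋+1} > q·N_m·r. -/
set_option maxHeartbeats 2000000


open scoped Classical

/-- The `q`-cyclotomic coset of `i` modulo `N`, with representatives taken in `{1, …, N}`. -/
noncomputable def cosetOf (q N i : ℕ) : Finset ℕ :=
  (Finset.Icc 1 N).filter (fun x => ∃ j : ℕ, x ≡ i * q ^ j [MOD N])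

/-- `Z_{n,r} = {1 + i r : 0 ≤ i ≤ n-1}`. -/
def Zset (n r : ℕ) : Finset ℕ := (Finset.range n).image (fun i => 1 + i * r)

/-- The collection of `q`-cyclotomic cosets contained in `Z_{n,r}`. -/
noncomputable def cosetsIn (q n r : ℕ) : Finset (Finset ℕ) :=
  (Zset n r).image (fun i => cosetOf q (n * r) i)

/-- `N_l`: the number of `q`-cyclotomic cosets of size `l` contained in `Z_{n,r}`. -/
noncomputable def Ncount (q n r l : ℕ) : ℕ :=
  ((cosetsIn q n r).filter (fun C => C.card = l)).card

/-- Coset leader: the smallest element of a coset. -/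
noncomputable def leader (C : Finset ℕ) : ℕ := sInf (C : Set ℕ)

/-- The sorted (increasing) list of coset leaders of the cosets of size `l` in `Z_{n,r}`. -/
noncomputable def leaderList (q n r l : ℕ) : List ℕ :=
  Finset.sort (((cosetsIn q n r).filter (fun C => C.card = l)).image leader) (· ≤ ·)

/-- `δ_i^{(l)}`: the `i`-th smallest coset leader (1-indexed). -/
noncomputable def delta (q n r l i : ℕ) : ℕ := (leaderList q n r l).getD (i - 1) 0

section basic
variable {q N : ℕ}

lemma mem_cosetOf {i x : ℕ} :
    x ∈ cosetOf q N i ↔ (1 ≤ x ∧ x ≤ N) ∧ ∃ j : ℕ, x ≡ i * q ^ j [MOD N] := by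
  simp [cosetOf, Finset.mem_filter, Finset.mem_Icc]

lemma pow_totient_one (hcop : Nat.Coprime q N) (hN : 0 < N) :
    0 < N.totient ∧ q ^ N.totient ≡ 1 [MOD N] :=
  ⟨Nat.totient_pos.mpr hN, Nat.ModEq.pow_totient hcop⟩

lemma rel_symm (hcop : Nat.Coprime q N) (hN : 0 < N) {x i : ℕ}
    (h : ∃ j : ℕ, x ≡ i * q ^ j [MOD N]) : ∃ j : ℕ, i ≡ x * q ^ j [MOD N] := by
  obtain ⟨j, hj⟩ := h
  obtain ⟨he0, he⟩ := pow_totient_one hcop hN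
  refine ⟨j * (N.totient - 1), ?_⟩
  have h1 : x * q ^ (j * (N.totient - 1)) ≡ (i * q ^ j) * q ^ (j * (N.totient - 1)) [MOD N] :=
    hj.mul_right _
  have h2 : (i * q ^ j) * q ^ (j * (N.totient - 1)) = i * (q ^ N.totient) ^ j := by
    rw [mul_assoc, ← pow_add, ← pow_mul]
    congr 2
    have : 1 + (N.totient - 1) = N.totient := by omega
    calc j + j * (N.totient - 1) = j * (1 + (N.totient - 1)) := by ring
      _ = j * N.totient := by rw [this]
      _ = N.totient * j := by ring
  have h3 : i * (q ^ N.totient) ^ j ≡ i * 1 ^ j [MOD N] := (he.pow j).mul_left i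
  have h4 : x * q ^ (j * (N.totient - 1)) ≡ i [MOD N] := by
    calc x * q ^ (j * (N.totient - 1)) ≡ (i * q ^ j) * q ^ (j * (N.totient - 1)) [MOD N] := h1
      _ = i * (q ^ N.totient) ^ j := h2
      _ ≡ i * 1 ^ j [MOD N] := h3
      _ = i := by ring
  exact h4.symm

lemma rep_eq {x y : ℕ} (hx : 1 ≤ x ∧ x ≤ N) (hy : 1 ≤ y ∧ y ≤ N)
    (h : x ≡ y [MOD N]) : x = y := by
  rcases le_or_gt x y with hle | hlt
  · have hd := (Nat.modEq_iff_dvd' hle).mp h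
    rcases Nat.eq_zero_or_pos (y - x) with h0 | h0
    · omega
    · have := Nat.le_of_dvd h0 hd; omega
  · have hd := (Nat.modEq_iff_dvd' hlt.le).mp h.symm
    rcases Nat.eq_zero_or_pos (x - y) with h0 | h0
    · omega
    · have := Nat.le_of_dvd h0 hd; omega

end basic

section coset
variable {q N : ℕ}

lemma cosetOf_eq_of_mem (hcop : Nat.Coprime q N) (hN : 0 < N) {i x : ℕ}
    (hx : x ∈ cosetOf q N i) : cosetOf q N x = cosetOf q N i := by
  obtain ⟨hxr, j0, hj0⟩ := mem_cosetOf.mp hx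
  ext y
  simp only [mem_cosetOf]
  constructor
  · rintro ⟨hyr, j, hj⟩
    exact ⟨hyr, j0 + j, by
      have := hj.trans ((hj0.mul_right (q ^ j)))
      simpa [mul_assoc, ← pow_add] using this⟩
  · rintro ⟨hyr, j, hj⟩
    obtain ⟨j1, hj1⟩ := rel_symm hcop hN ⟨j0, hj0⟩
    exact ⟨hyr, j1 + j, by
      have := hj.trans (hj1.mul_right (q ^ j))
      simpa [mul_assoc, ← pow_add] using this⟩

/-- the canonical representative in `[1, N]` of `a`. -/
def repIn (N a : ℕ) : ℕ := if a % N = 0 then N else a % N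

lemma repIn_spec (hN : 0 < N) (a : ℕ) :
    (1 ≤ repIn N a ∧ repIn N a ≤ N) ∧ repIn N a ≡ a [MOD N] := by
  unfold repIn
  split_ifs with h
  · refine ⟨⟨hN, le_rfl⟩, ?_⟩
    have : a ≡ a % N [MOD N] := (Nat.mod_modEq a N).symm
    rw [h] at this
    have h2 : N ≡ 0 [MOD N] := (Nat.modEq_zero_iff_dvd).mpr dvd_rfl
    exact (h2.trans this.symm)
  · have hlt := Nat.mod_lt a hN
    exact ⟨⟨by omega, by omega⟩, Nat.mod_modEq a N⟩

lemma pow_period_mul {x p : ℕ} (hp : x * q ^ p ≡ x [MOD N]) :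
    ∀ t, x * q ^ (p * t) ≡ x [MOD N] := by
  intro t
  induction t with
  | zero => simpa using Nat.ModEq.refl x
  | succ t ih =>
    have : x * q ^ (p * (t + 1)) = (x * q ^ (p * t)) * q ^ p := by ring
    rw [this]
    exact (ih.mul_right _).trans hp

lemma card_cosetOf_eq_period (hcop : Nat.Coprime q N) (hN : 0 < N) {x p : ℕ}
    (hx : 1 ≤ x ∧ x ≤ N) (hp0 : 0 < p) (hp : x * q ^ p ≡ x [MOD N])
    (hmin : ∀ j, 0 < j → j < p → ¬ (x * q ^ j ≡ x [MOD N])) :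
    (cosetOf q N x).card = p := by
  have hrep : ∀ j : ℕ, repIn N (x * q ^ j) ∈ cosetOf q N x := by
    intro j
    obtain ⟨hin, hmod⟩ := repIn_spec hN (x * q ^ j)
    exact mem_cosetOf.mpr ⟨hin, j, hmod⟩
  have himg : cosetOf q N x = (Finset.range p).image (fun j => repIn N (x * q ^ j)) := by
    ext y
    constructor
    · intro hy
      obtain ⟨hyr, j, hj⟩ := mem_cosetOf.mp hy
      have hjs : x * q ^ j ≡ x * q ^ (j % p) [MOD N] := by
        have he : x * q ^ j = x * q ^ (p * (j / p)) * q ^ (j % p) := by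
          rw [mul_assoc, ← pow_add, Nat.div_add_mod]
        rw [he]
        exact (pow_period_mul hp (j / p)).mul_right _
      refine Finset.mem_image.mpr ⟨j % p, Finset.mem_range.mpr (Nat.mod_lt _ hp0), ?_⟩
      obtain ⟨hin, hmod⟩ := repIn_spec hN (x * q ^ (j % p))
      exact rep_eq hin hyr (hmod.trans (hjs.symm.trans hj.symm))
    · intro hy
      obtain ⟨j, _, hj⟩ := Finset.mem_image.mp hy
      exact hj ▸ hrep j
  rw [himg, Finset.card_image_of_injOn, Finset.card_range]
  have key : ∀ a b : ℕ, a < b → b < p →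
      repIn N (x * q ^ a) = repIn N (x * q ^ b) → False := by
    intro a b hlt hb hab
    obtain ⟨hina, hmoda⟩ := repIn_spec hN (x * q ^ a)
    obtain ⟨hinb, hmodb⟩ := repIn_spec hN (x * q ^ b)
    have heq : x * q ^ a ≡ x * q ^ b [MOD N] := hmoda.symm.trans (hab ▸ hmodb)
    have hxb : x * q ^ b = q ^ a * (x * q ^ (b - a)) := by
      rw [← mul_assoc, mul_comm (q ^ a) x, mul_assoc, ← pow_add]
      congr 2
      omega
    have heq2 : q ^ a * (x * q ^ (b - a)) ≡ q ^ a * x [MOD N] := by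
      calc q ^ a * (x * q ^ (b - a)) = x * q ^ b := hxb.symm
        _ ≡ x * q ^ a [MOD N] := heq.symm
        _ = q ^ a * x := by ring
    have hcan : x * q ^ (b - a) ≡ x [MOD N] :=
      Nat.ModEq.cancel_left_of_coprime (hcop.pow_left a).symm heq2
    exact hmin (b - a) (by omega) (by omega) hcan
  intro a ha b hb hab
  simp only [Finset.mem_coe, Finset.mem_range] at ha hb
  simp only [] at hab
  rcases Nat.lt_trichotomy a b with h | h | h
  · exact absurd (key a b h hb hab) (fun f => f)
  · exact h
  · exact absurd (key b a h ha hab.symm) (fun f => f)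

end coset

section cardcor
variable {q N : ℕ}

lemma exists_period (hcop : Nat.Coprime q N) (hN : 0 < N) (x : ℕ) :
    ∃ p, 0 < p ∧ x * q ^ p ≡ x [MOD N] := by
  obtain ⟨he0, he⟩ := pow_totient_one hcop hN
  exact ⟨N.totient, he0, by simpa using (he.mul_left x)⟩

lemma card_cosetOf_eq_find (hcop : Nat.Coprime q N) (hN : 0 < N) {x : ℕ}
    (hx : 1 ≤ x ∧ x ≤ N) :
    (cosetOf q N x).card = Nat.find (exists_period hcop hN x) := by
  set p := Nat.find (exists_period hcop hN x) with hpdef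
  obtain ⟨hp0, hp⟩ := Nat.find_spec (exists_period hcop hN x)
  refine card_cosetOf_eq_period hcop hN hx hp0 hp ?_
  intro j hj0 hjp hcontra
  exact Nat.find_min (exists_period hcop hN x) hjp ⟨hj0, hcontra⟩

lemma pow_of_card (hcop : Nat.Coprime q N) (hN : 0 < N) {x c : ℕ}
    (hx : 1 ≤ x ∧ x ≤ N) (hc : (cosetOf q N x).card = c) :
    x * q ^ c ≡ x [MOD N] := by
  rw [card_cosetOf_eq_find hcop hN hx] at hc
  obtain ⟨hp0, hp⟩ := Nat.find_spec (exists_period hcop hN x)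
  exact hc ▸ hp

lemma card_le_of_pow (hcop : Nat.Coprime q N) (hN : 0 < N) {x c : ℕ}
    (hx : 1 ≤ x ∧ x ≤ N) (hc0 : 0 < c) (hc : x * q ^ c ≡ x [MOD N]) :
    (cosetOf q N x).card ≤ c := by
  rw [card_cosetOf_eq_find hcop hN hx]
  exact Nat.find_le ⟨hc0, hc⟩

end cardcor

section zset
variable {n r : ℕ}

lemma mem_Zset_iff (hn : 0 < n) (hr : 0 < r) {x : ℕ} :
    x ∈ Zset n r ↔ 1 ≤ x ∧ x ≤ n * r ∧ x ≡ 1 [MOD r] := by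
  constructor
  · intro hx
    obtain ⟨i, hi, rfl⟩ := Finset.mem_image.mp hx
    rw [Finset.mem_range] at hi
    refine ⟨by omega, ?_, ?_⟩
    · have h1 : (i + 1) * r ≤ n * r := Nat.mul_le_mul_right r (by omega)
      have h2 : 1 + i * r ≤ (i + 1) * r := by
        have e : (i + 1) * r = i * r + r := by ring
        omega
      omega
    · show (1 + i * r) % r = 1 % r
      simp [Nat.add_mul_mod_self_right]
  · rintro ⟨h1, h2, h3⟩
    have hdvd : r ∣ x - 1 := (Nat.modEq_iff_dvd' h1).mp h3.symm
    obtain ⟨i, hi⟩ := hdvd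
    have hx : x = 1 + i * r := by rw [mul_comm]; omega
    refine Finset.mem_image.mpr ⟨i, Finset.mem_range.mpr ?_, hx.symm⟩
    by_contra hcon
    push_neg at hcon
    have h4 : n * r ≤ i * r := Nat.mul_le_mul_right r hcon
    omega

lemma card_Zset (hr : 0 < r) : (Zset n r).card = n := by
  rw [Zset, Finset.card_image_of_injective _ (fun a b h => by
    have : a * r = b * r := by omega
    exact Nat.eq_of_mul_eq_mul_right hr this)]
  exact Finset.card_range n

end zset

section partition
variable {q n r : ℕ}

lemma coset_subset_Zset (hn : 0 < n) (hr : 0 < r) (hq1 : q ≡ 1 [MOD r])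
    {i : ℕ} (hi : i ∈ Zset n r) : cosetOf q (n * r) i ⊆ Zset n r := by
  intro x hx
  obtain ⟨⟨h1, h2⟩, j, hj⟩ := mem_cosetOf.mp hx
  obtain ⟨hi1, hi2, hi3⟩ := (mem_Zset_iff hn hr).mp hi
  have hrd : r ∣ n * r := dvd_mul_left r n
  have hxr : x ≡ i * q ^ j [MOD r] := hj.of_dvd hrd
  have : i * q ^ j ≡ 1 * 1 ^ j [MOD r] := hi3.mul (hq1.pow j)
  exact (mem_Zset_iff hn hr).mpr ⟨h1, h2, by simpa using hxr.trans this⟩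

lemma self_mem_cosetOf (hn : 0 < n) (hr : 0 < r) {i : ℕ} (hi : i ∈ Zset n r) :
    i ∈ cosetOf q (n * r) i := by
  obtain ⟨h1, h2, _⟩ := (mem_Zset_iff hn hr).mp hi
  exact mem_cosetOf.mpr ⟨⟨h1, h2⟩, 0, by simpa using Nat.ModEq.refl i⟩

lemma mem_of_cosetsIn (hcop : Nat.Coprime q (n * r)) (hn : 0 < n) (hr : 0 < r)
    {C : Finset ℕ} (hC : C ∈ cosetsIn q n r) {x : ℕ} (hx : x ∈ C) :
    C = cosetOf q (n * r) x := by
  obtain ⟨i, _, rfl⟩ := Finset.mem_image.mp hC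
  exact (cosetOf_eq_of_mem hcop (by positivity) hx).symm

lemma Zset_eq_biUnion (hcop : Nat.Coprime q (n * r)) (hn : 0 < n) (hr : 0 < r)
    (hq1 : q ≡ 1 [MOD r]) : Zset n r = (cosetsIn q n r).biUnion id := by
  ext x
  constructor
  · intro hx
    exact Finset.mem_biUnion.mpr ⟨cosetOf q (n * r) x,
      Finset.mem_image_of_mem _ hx, self_mem_cosetOf hn hr hx⟩
  · intro hx
    obtain ⟨C, hC, hxC⟩ := Finset.mem_biUnion.mp hx
    obtain ⟨i, hi, rfl⟩ := Finset.mem_image.mp hC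
    exact coset_subset_Zset hn hr hq1 hi hxC

lemma cosetsIn_disjoint (hcop : Nat.Coprime q (n * r)) (hn : 0 < n) (hr : 0 < r) :
    ∀ C1 ∈ cosetsIn q n r, ∀ C2 ∈ cosetsIn q n r, C1 ≠ C2 → Disjoint C1 C2 := by
  intro C1 h1 C2 h2 hne
  rw [Finset.disjoint_left]
  intro x hx1 hx2
  exact hne ((mem_of_cosetsIn hcop hn hr h1 hx1).trans
    (mem_of_cosetsIn hcop hn hr h2 hx2).symm)

lemma sum_card_cosetsIn (hcop : Nat.Coprime q (n * r)) (hn : 0 < n) (hr : 0 < r)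
    (hq1 : q ≡ 1 [MOD r]) : ∑ C ∈ cosetsIn q n r, C.card = n := by
  have h := Zset_eq_biUnion hcop hn hr hq1
  have := Finset.card_biUnion (s := cosetsIn q n r) (t := id)
    (fun C h1 D h2 hne => cosetsIn_disjoint hcop hn hr C h1 D h2 hne)
  rw [← h, card_Zset hr] at this
  simpa using this.symm

end partition

section chain

lemma sorted_chain_ge {L x0 : ℕ} (lst : List ℕ) (hsort : lst.Pairwise (· < ·))
    (hcong : ∀ a ∈ lst, ∀ b ∈ lst, a ≡ b [MOD L])
    (hx0 : ∀ a ∈ lst, x0 ≤ a) :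
    ∀ i : ℕ, i < lst.length → x0 + i * L ≤ lst.getD i 0 := by
  intro i
  induction i with
  | zero =>
    intro hi
    rw [List.getD_eq_getElem _ _ hi]
    simpa using hx0 _ (lst.getElem_mem hi)
  | succ i ih =>
    intro hi
    have hi' : i < lst.length := by omega
    have ha := lst.getElem_mem hi'
    have hb := lst.getElem_mem hi
    have hlt : lst[i] < lst[i + 1] := by
      have := List.pairwise_iff_getElem.mp hsort i (i + 1) hi' hi (by omega)
      simpa using this
    have hcg : lst[i] ≡ lst[i + 1] [MOD L] := hcong _ ha _ hb
    have hdvd : L ∣ lst[i + 1] - lst[i] := (Nat.modEq_iff_dvd' hlt.le).mp hcg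
    have hL : L ≤ lst[i + 1] - lst[i] ∨ lst[i + 1] - lst[i] = 0 := by
      rcases Nat.eq_zero_or_pos (lst[i + 1] - lst[i]) with h | h
      · right; exact h
      · left; exact Nat.le_of_dvd h hdvd
    have := ih hi'
    rw [List.getD_eq_getElem _ _ hi'] at this
    rw [List.getD_eq_getElem _ _ hi]
    have : x0 + i * L ≤ lst[i] := this
    rcases hL with h | h
    · calc x0 + (i + 1) * L = (x0 + i * L) + L := by ring
        _ ≤ lst[i] + L := Nat.add_le_add_right this L
        _ ≤ lst[i + 1] := by omega
    · omega

end chain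

section arith

lemma final_arith (q r l m Nl Nm L x0 n k δ : ℕ)
    (hq2 : 2 ≤ q) (hr1 : 1 ≤ r) (hrq : r ≤ q - 1) (hl : 1 ≤ l)
    (hm : 2 * l ≤ m) (hNl2 : 2 ≤ Nl) (hk : k = Nl / 2)
    (hn : n = l * Nl + m * Nm) (hNL : n * r ≤ L * (l * Nl))
    (hx0L : L ≤ r * x0) (hx01 : 1 ≤ x0) (hL1 : 1 ≤ L)
    (hδ : x0 + k * L ≤ δ) :
    q * Nm * r < 2 * (q - 1) * δ := by
  obtain ⟨Q, rfl⟩ : ∃ Q, q = Q + 1 := ⟨q - 1, by omega⟩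
  have hQ : 1 ≤ Q := by omega
  have hQ1 : Q + 1 - 1 = Q := by omega
  rw [hQ1] at hrq ⊢
  -- key inequality A2
  have hA2 : (Q + 1) * Nl * L < 4 * Q * (x0 + k * L) + (Q + 1) * Nl * r := by
    have hrpos : 0 < (Q + 1) * Nl * r := by positivity
    rcases Nat.even_or_odd Nl with ⟨a, ha⟩ | ⟨a, ha⟩
    · -- even : Nl = a + a, k = a
      have hka : k = a := by omega
      subst hka ha
      have h1 : (Q + 1) * ((k + k) * L) ≤ (2 * Q) * ((k + k) * L) :=
        Nat.mul_le_mul_right _ (by omega)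
      have h2 : 0 < 4 * Q * x0 := by positivity
      calc (Q + 1) * (k + k) * L = (Q + 1) * ((k + k) * L) := by ring
        _ ≤ (2 * Q) * ((k + k) * L) := h1
        _ = 4 * Q * (k * L) := by ring
        _ < 4 * Q * x0 + 4 * Q * (k * L) := by omega
        _ = 4 * Q * (x0 + k * L) := by ring
        _ ≤ 4 * Q * (x0 + k * L) + (Q + 1) * (k + k) * r := Nat.le_add_right _ _
    · -- odd : Nl = 2a + 1, k = a, a ≥ 1
      have hka : k = a := by omega
      have ha1 : 1 ≤ a := by omega
      subst hka ha
      have hQx0 : L ≤ Q * x0 := hx0L.trans (Nat.mul_le_mul_right x0 hrq)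
      have hcoef : (Q + 1) * (2 * k + 1) ≤ 4 + 4 * Q * k := by
        obtain ⟨Q', rfl⟩ : ∃ Q', Q = Q' + 1 := ⟨Q - 1, by omega⟩
        obtain ⟨k', rfl⟩ : ∃ k', k = k' + 1 := ⟨k - 1, by omega⟩
        have e1 : (Q' + 1 + 1) * (2 * (k' + 1) + 1)
            = 2 * (Q' * k') + 3 * Q' + 4 * k' + 6 := by ring
        have e2 : 4 + 4 * (Q' + 1) * (k' + 1)
            = 4 * (Q' * k') + 4 * Q' + 4 * k' + 8 := by ring
        omega
      calc (Q + 1) * (2 * k + 1) * L = ((Q + 1) * (2 * k + 1)) * L := by ring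
        _ ≤ (4 + 4 * Q * k) * L := Nat.mul_le_mul_right _ hcoef
        _ = 4 * L + 4 * Q * (k * L) := by ring
        _ ≤ 4 * (Q * x0) + 4 * Q * (k * L) :=
            Nat.add_le_add_right (Nat.mul_le_mul_left _ hQx0) _
        _ = 4 * Q * (x0 + k * L) := by ring
        _ < 4 * Q * (x0 + k * L) + (Q + 1) * (2 * k + 1) * r := by
            have : 0 < (Q + 1) * (2 * k + 1) * r := by positivity
            omega
  -- combine
  have hB : (Q + 1) * (n * r) = (Q + 1) * l * Nl * r + (Q + 1) * m * Nm * r := by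
    rw [hn]; ring
  have hC : 2 * l * ((Q + 1) * Nm * r) ≤ m * ((Q + 1) * Nm * r) :=
    Nat.mul_le_mul_right _ hm
  have hCe : m * ((Q + 1) * Nm * r) = (Q + 1) * m * Nm * r := by ring
  have hA : (Q + 1) * (n * r) ≤ (Q + 1) * (L * (l * Nl)) :=
    Nat.mul_le_mul_left _ hNL
  have hAe : (Q + 1) * (L * (l * Nl)) = (Q + 1) * l * Nl * L := by ring
  have H1 : (Q + 1) * l * Nl * r + 2 * l * ((Q + 1) * Nm * r)
      ≤ (Q + 1) * l * Nl * L := by omega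
  have hA2l : (Q + 1) * l * Nl * L
      < 4 * l * Q * (x0 + k * L) + (Q + 1) * l * Nl * r := by
    calc (Q + 1) * l * Nl * L = l * ((Q + 1) * Nl * L) := by ring
      _ < l * (4 * Q * (x0 + k * L) + (Q + 1) * Nl * r) :=
          Nat.mul_lt_mul_of_le_of_lt (le_refl l) hA2 (by omega)
      _ = 4 * l * Q * (x0 + k * L) + (Q + 1) * l * Nl * r := by ring
  have H2 : 2 * l * ((Q + 1) * Nm * r) < 4 * l * Q * (x0 + k * L) := by omega
  have H3 : 4 * l * Q * (x0 + k * L) ≤ 4 * l * Q * δ := Nat.mul_le_mul_left _ hδ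
  have H4 : 2 * l * ((Q + 1) * Nm * r) < 2 * l * (2 * Q * δ) := by
    have he : 4 * l * Q * δ = 2 * l * (2 * Q * δ) := by ring
    omega
  exact Nat.lt_of_mul_lt_mul_left H4

end arith


theorem stmt5 (q n r m s l : ℕ) (hq : IsPrimePow q) (hn : 0 < n) (hco : Nat.Coprime n q)
    (hr : 0 < r) (hrdvd : r ∣ q - 1) (hm : 0 < m) (hs : 0 < s)
    (hnrs : n * r * s = q ^ m - 1)
    (hl : 0 < l) (hlm : l < m) (hldvd : l ∣ m)
    (hset : (Zset n r).image (fun i => (cosetOf q (n * r) i).card) = {l, m})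
    (hNl : 1 < Ncount q n r l) :
    q * Ncount q n r m * r < 2 * (q - 1) * delta q n r l (Ncount q n r l / 2 + 1) := by
  have hq2 : 2 ≤ q := hq.two_le
  have hN : 0 < n * r := by positivity
  have hqq1 : Nat.Coprime q (q - 1) := by
    have h1 : Nat.gcd q (q - 1) ∣ q := Nat.gcd_dvd_left _ _
    have h2 : Nat.gcd q (q - 1) ∣ q - 1 := Nat.gcd_dvd_right _ _
    have h3 : Nat.gcd q (q - 1) ∣ q - (q - 1) := Nat.dvd_sub h1 h2
    have h4 : q - (q - 1) = 1 := by omega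
    rw [h4] at h3
    exact Nat.eq_one_of_dvd_one h3
  have hqr : Nat.Coprime q r := Nat.Coprime.coprime_dvd_right hrdvd hqq1
  have hcop : Nat.Coprime q (n * r) := Nat.Coprime.mul_right hco.symm hqr
  have hq1r : q ≡ 1 [MOD r] := ((Nat.modEq_iff_dvd' (by omega : 1 ≤ q)).mpr hrdvd).symm
  have hrq : r ≤ q - 1 := Nat.le_of_dvd (by omega) hrdvd
  have hm2l : 2 * l ≤ m := by
    obtain ⟨c, rfl⟩ := hldvd
    have hc2 : 2 ≤ c := by
      rcases Nat.lt_or_ge c 2 with h | h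
      · interval_cases c <;> simp at hlm <;> omega
      · exact h
    calc 2 * l = l * 2 := by ring
      _ ≤ l * c := Nat.mul_le_mul_left l hc2
  -- every coset in cosetsIn has card l or m
  have hcards : ∀ C ∈ cosetsIn q n r, C.card = l ∨ C.card = m := by
    intro C hC
    obtain ⟨i, hi, rfl⟩ := Finset.mem_image.mp hC
    have : (cosetOf q (n * r) i).card ∈ ({l, m} : Finset ℕ) := by
      rw [← hset]; exact Finset.mem_image_of_mem _ hi
    simpa using this
  -- n = l * N_l + m * N_m
  have hfilter_eq : (cosetsIn q n r).filter (fun C => ¬ C.card = l)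
      = (cosetsIn q n r).filter (fun C => C.card = m) := by
    apply Finset.filter_congr
    intro C hC
    rcases hcards C hC with h | h <;> simp [h] <;> omega
  have hsum := sum_card_cosetsIn hcop hn hr hq1r
  rw [← Finset.sum_filter_add_sum_filter_not (cosetsIn q n r) (fun C => C.card = l)] at hsum
  have hsum1 : ∑ C ∈ (cosetsIn q n r).filter (fun C => C.card = l), C.card
      = Ncount q n r l * l :=
    Finset.sum_const_nat (fun C hC => (Finset.mem_filter.mp hC).2)
  have hsum2 : ∑ C ∈ (cosetsIn q n r).filter (fun C => ¬ C.card = l), C.card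
      = Ncount q n r m * m := by
    rw [hfilter_eq]
    exact Finset.sum_const_nat (fun C hC => (Finset.mem_filter.mp hC).2)
  have hn_eq : n = l * Ncount q n r l + m * Ncount q n r m := by
    rw [hsum1, hsum2] at hsum
    calc n = Ncount q n r l * l + Ncount q n r m * m := hsum.symm
      _ = l * Ncount q n r l + m * Ncount q n r m := by ring
  -- the set S of elements in size-l cosets
  set S : Finset ℕ := ((cosetsIn q n r).filter (fun C => C.card = l)).biUnion id with hSdef
  have hScard : S.card = l * Ncount q n r l := by
    have hb := Finset.card_biUnion (s := (cosetsIn q n r).filter (fun C => C.card = l))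
      (t := id) (fun C h1 D h2 hne =>
      cosetsIn_disjoint hcop hn hr C (Finset.mem_filter.mp h1).1 D
        (Finset.mem_filter.mp h2).1 hne)
    rw [hSdef, hb]
    simp only [id]
    rw [hsum1]; ring
  -- membership characterizations
  have hSmem1 : ∀ x ∈ S, (1 ≤ x ∧ x ≤ n * r) ∧ x ≡ 1 [MOD r]
      ∧ x * q ^ l ≡ x [MOD n * r] := by
    intro x hx
    obtain ⟨C, hC, hxC⟩ := Finset.mem_biUnion.mp hx
    obtain ⟨hCin, hCl⟩ := Finset.mem_filter.mp hC
    have hCeq := mem_of_cosetsIn hcop hn hr hCin hxC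
    have hxx : x ∈ cosetOf q (n * r) x := hCeq ▸ hxC
    obtain ⟨hbd, _⟩ := mem_cosetOf.mp hxx
    have hxZ : x ∈ Zset n r := by
      obtain ⟨i, hi, rfl⟩ := Finset.mem_image.mp hCin
      exact coset_subset_Zset hn hr hq1r hi hxC
    obtain ⟨_, _, hx1⟩ := (mem_Zset_iff hn hr).mp hxZ
    refine ⟨hbd, hx1, ?_⟩
    have hcl : (cosetOf q (n * r) x).card = l := by rw [← hCeq]; exact hCl
    exact pow_of_card hcop hN hbd hcl
  have hSmem2 : ∀ x, 1 ≤ x → x ≤ n * r → x ≡ 1 [MOD r]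
      → x * q ^ l ≡ x [MOD n * r] → x ∈ S := by
    intro x h1 h2 h3 h4
    have hxZ : x ∈ Zset n r := (mem_Zset_iff hn hr).mpr ⟨h1, h2, h3⟩
    have hcle : (cosetOf q (n * r) x).card ≤ l := card_le_of_pow hcop hN ⟨h1, h2⟩ hl h4
    have hmem : cosetOf q (n * r) x ∈ cosetsIn q n r := Finset.mem_image_of_mem _ hxZ
    have hcl : (cosetOf q (n * r) x).card = l := by
      rcases hcards _ hmem with h | h
      · exact h
      · omega
    exact Finset.mem_biUnion.mpr ⟨cosetOf q (n * r) x,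
      Finset.mem_filter.mpr ⟨hmem, hcl⟩, self_mem_cosetOf hn hr hxZ⟩
  -- translate the power condition into divisibility
  have hql : 2 ≤ q ^ l := by
    calc 2 = 2 ^ 1 := by norm_num
      _ ≤ q ^ 1 := Nat.pow_le_pow_left hq2 1
      _ ≤ q ^ l := Nat.pow_le_pow_right (by omega) hl
  have hdvd_iff : ∀ x : ℕ, (x * q ^ l ≡ x [MOD n * r]) ↔ (n * r ∣ x * (q ^ l - 1)) := by
    intro x
    have hle : x ≤ x * q ^ l := Nat.le_mul_of_pos_right x (by omega)
    rw [show (x * q ^ l ≡ x [MOD n * r]) ↔ (x ≡ x * q ^ l [MOD n * r]) from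
      ⟨Nat.ModEq.symm, Nat.ModEq.symm⟩]
    rw [Nat.modEq_iff_dvd' hle]
    have : x * q ^ l - x = x * (q ^ l - 1) := by
      obtain ⟨t, ht⟩ : ∃ t, q ^ l = t + 1 := ⟨q ^ l - 1, by omega⟩
      rw [ht]
      have h5 : x * (t + 1) = x * t + x := by ring
      have h6 : x * (t + 1 - 1) = x * t := by simp
      omega
    rw [this]
  -- d and L
  set g : ℕ := Nat.gcd (n * r) (q ^ l - 1) with hgdef
  have hgpos : 0 < g := Nat.gcd_pos_of_pos_left _ hN
  set d : ℕ := (n * r) / g with hddef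
  have hdN : d ∣ n * r := Nat.div_dvd_of_dvd (Nat.gcd_dvd_left _ _)
  have hdg : d * g = n * r := Nat.div_mul_cancel (Nat.gcd_dvd_left _ _)
  have hdpos : 0 < d := by
    rcases Nat.eq_zero_or_pos d with h | h
    · rw [h] at hdg; simp at hdg; omega
    · exact h
  have hd_dvd_of : ∀ x : ℕ, (n * r ∣ x * (q ^ l - 1)) → d ∣ x := by
    intro x hx
    have ha : (q ^ l - 1) / g * g = q ^ l - 1 := Nat.div_mul_cancel (Nat.gcd_dvd_right _ _)
    have h1 : d * g ∣ (x * ((q ^ l - 1) / g)) * g := by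
      rw [hdg, mul_assoc, ha]; exact hx
    have h2 : d ∣ x * ((q ^ l - 1) / g) := (Nat.mul_dvd_mul_iff_right hgpos).mp h1
    have hcop2 : Nat.Coprime d ((q ^ l - 1) / g) := Nat.coprime_div_gcd_div_gcd hgpos
    exact hcop2.dvd_of_dvd_mul_right h2
  have hd_dvd_to : ∀ x : ℕ, d ∣ x → (n * r ∣ x * (q ^ l - 1)) := by
    rintro x ⟨t, rfl⟩
    obtain ⟨a', ha'⟩ := Nat.gcd_dvd_right (n * r) (q ^ l - 1)
    rw [← hdg, ha']
    exact ⟨t * a', by ring⟩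
  set L : ℕ := Nat.lcm d r with hLdef
  have hLN : L ∣ n * r := Nat.lcm_dvd hdN (dvd_mul_left r n)
  have hLpos : 0 < L := Nat.lcm_pos hdpos hr
  -- all elements of S are congruent mod L
  have hSd : ∀ x ∈ S, d ∣ x := by
    intro x hx
    obtain ⟨_, _, hpow⟩ := hSmem1 x hx
    exact hd_dvd_of x ((hdvd_iff x).mp hpow)
  have hcongr : ∀ x ∈ S, ∀ y ∈ S, x ≡ y [MOD L] := by
    have key : ∀ x ∈ S, ∀ y ∈ S, x ≤ y → x ≡ y [MOD L] := by
      intro x hx y hy hxy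
      obtain ⟨⟨hx1, _⟩, hxr, _⟩ := hSmem1 x hx
      obtain ⟨⟨hy1, _⟩, hyr, _⟩ := hSmem1 y hy
      have hdd : d ∣ y - x := Nat.dvd_sub (hSd y hy) (hSd x hx)
      have hrr : r ∣ y - x := (Nat.modEq_iff_dvd' hxy).mp (hxr.trans hyr.symm)
      exact (Nat.modEq_iff_dvd' hxy).mpr (Nat.lcm_dvd hdd hrr)
    intro x hx y hy
    rcases le_total x y with h | h
    · exact key x hx y hy h
    · exact (key y hy x hx h).symm
  -- S is nonempty, pick the least element x0
  have hSne : S.Nonempty := by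
    have hpos : 0 < ((cosetsIn q n r).filter (fun C => C.card = l)).card := by
      have : Ncount q n r l = ((cosetsIn q n r).filter (fun C => C.card = l)).card := rfl
      omega
    obtain ⟨C, hC⟩ := Finset.card_pos.mp hpos
    have hCl : C.card = l := (Finset.mem_filter.mp hC).2
    obtain ⟨x, hx⟩ := Finset.card_pos.mp (by omega : 0 < C.card)
    exact ⟨x, Finset.mem_biUnion.mpr ⟨C, hC, hx⟩⟩
  set x0 : ℕ := S.min' hSne with hx0def
  have hx0S : x0 ∈ S := S.min'_mem hSne
  obtain ⟨⟨hx01, hx0N⟩, hx0r, _⟩ := hSmem1 x0 hx0S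
  have hx0d : d ∣ x0 := hSd x0 hx0S
  have hdL : d ∣ L := Nat.dvd_lcm_left d r
  have hrL : r ∣ L := Nat.dvd_lcm_right d r
  -- x0 ≤ L
  have hx0L : x0 ≤ L := by
    by_contra hcon
    push_neg at hcon
    set y := x0 - L with hydef
    have hy1 : 1 ≤ y := by omega
    have hyN : y ≤ n * r := by omega
    have hyd : d ∣ y := Nat.dvd_sub hx0d (hdL)
    have hyr : y ≡ 1 [MOD r] := by
      have h1 : y ≡ x0 [MOD r] := by
        refine (Nat.modEq_iff_dvd' (by omega)).mpr ?_
        have : x0 - y = L := by omega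
        rw [this]; exact hrL
      exact h1.trans hx0r
    have hyS : y ∈ S := hSmem2 y hy1 hyN hyr ((hdvd_iff y).mpr (hd_dvd_to y hyd))
    have := S.min'_le y hyS
    omega
  -- counting: n * r ≤ L * (l * N_l)
  have hLS : n * r ≤ L * (l * Ncount q n r l) := by
    set K := (n * r) / L with hKdef
    have hKL : K * L = n * r := Nat.div_mul_cancel hLN
    have hTsub : ∀ j, j < K → x0 + j * L ∈ S := by
      intro j hj
      have hle : x0 + j * L ≤ n * r := by
        have h1 : j + 1 ≤ K := hj
        have h2 : (j + 1) * L ≤ K * L := Nat.mul_le_mul_right L h1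
        have h3 : x0 + j * L ≤ (j + 1) * L := by
          calc x0 + j * L ≤ L + j * L := Nat.add_le_add_right hx0L _
            _ = (j + 1) * L := by ring
        omega
      have hjr : x0 + j * L ≡ 1 [MOD r] := by
        have h1 : x0 + j * L ≡ x0 [MOD r] := by
          refine ((Nat.modEq_iff_dvd' (by omega)).mpr ?_).symm
          have : x0 + j * L - x0 = j * L := by omega
          rw [this]
          exact Dvd.dvd.mul_left hrL j
        exact h1.trans hx0r
      have hjd : d ∣ x0 + j * L := Nat.dvd_add hx0d (Dvd.dvd.mul_left hdL j)
      exact hSmem2 _ (by omega) hle hjr ((hdvd_iff _).mpr (hd_dvd_to _ hjd))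
    have hinj : ∀ a ∈ Finset.range K, ∀ b ∈ Finset.range K,
        x0 + a * L = x0 + b * L → a = b := by
      intro a _ b _ h
      have : a * L = b * L := by omega
      exact Nat.eq_of_mul_eq_mul_right hLpos this
    have hTcard : ((Finset.range K).image (fun j => x0 + j * L)).card = K := by
      rw [Finset.card_image_of_injOn (fun a ha b hb h => hinj a ha b hb h)]
      exact Finset.card_range K
    have hTS : (Finset.range K).image (fun j => x0 + j * L) ⊆ S := by
      intro x hx
      obtain ⟨j, hj, rfl⟩ := Finset.mem_image.mp hx
      exact hTsub j (Finset.mem_range.mp hj)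
    have hKle : K ≤ l * Ncount q n r l := by
      rw [← hTcard, ← hScard]
      exact Finset.card_le_card hTS
    calc n * r = K * L := hKL.symm
      _ ≤ (l * Ncount q n r l) * L := Nat.mul_le_mul_right L hKle
      _ = L * (l * Ncount q n r l) := by ring
  -- leaders
  set Fl : Finset ℕ := ((cosetsIn q n r).filter (fun C => C.card = l)).image leader
    with hFldef
  have hleader_mem : ∀ C ∈ (cosetsIn q n r).filter (fun C => C.card = l),
      leader C ∈ C := by
    intro C hC
    have hCl : C.card = l := (Finset.mem_filter.mp hC).2
    have hne : (C : Set ℕ).Nonempty := by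
      obtain ⟨x, hx⟩ := Finset.card_pos.mp (by omega : 0 < C.card)
      exact ⟨x, hx⟩
    exact Nat.sInf_mem hne
  have hFlS : Fl ⊆ S := by
    intro x hx
    obtain ⟨C, hC, rfl⟩ := Finset.mem_image.mp hx
    exact Finset.mem_biUnion.mpr ⟨C, hC, hleader_mem C hC⟩
  have hFlinj : Set.InjOn leader
      ((cosetsIn q n r).filter (fun C => C.card = l) : Finset (Finset ℕ)) := by
    intro C1 h1 C2 h2 hl12
    rw [Finset.mem_coe] at h1 h2
    have h1' := (Finset.mem_filter.mp h1).1
    have h2' := (Finset.mem_filter.mp h2).1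
    have m1 := hleader_mem C1 h1
    have m2 := hleader_mem C2 h2
    rw [hl12] at m1
    exact (mem_of_cosetsIn hcop hn hr h1' m1).trans
      (mem_of_cosetsIn hcop hn hr h2' m2).symm
  have hFlcard : Fl.card = Ncount q n r l := by
    rw [hFldef, Finset.card_image_of_injOn hFlinj]
    rfl
  -- the sorted leader list
  have hlen : (leaderList q n r l).length = Ncount q n r l := by
    rw [leaderList, Finset.length_sort]
    exact hFlcard
  set k : ℕ := Ncount q n r l / 2 with hkdef
  have hkl : k < (leaderList q n r l).length := by rw [hlen]; omega
  have hsorted : (leaderList q n r l).Pairwise (· < ·) := List.sortedLT_iff_pairwise.mp (Finset.sortedLT_sort _)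
  have hmemlist : ∀ a ∈ leaderList q n r l, a ∈ S := by
    intro a ha
    have : a ∈ Fl := (Finset.mem_sort (α := ℕ) (r := (· ≤ ·))).mp ha
    exact hFlS this
  have hchain := sorted_chain_ge (L := L) (x0 := x0) (leaderList q n r l) hsorted
    (fun a ha b hb => hcongr a (hmemlist a ha) b (hmemlist b hb))
    (fun a ha => S.min'_le a (hmemlist a ha)) k hkl
  have hdelta : x0 + k * L ≤ delta q n r l (Ncount q n r l / 2 + 1) := by
    have : Ncount q n r l / 2 + 1 - 1 = k := by omega
    rw [delta, this]
    exact hchain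
  -- final arithmetic
  have hLrx0 : L ≤ r * x0 := by
    have h1 : L ∣ d * r := Nat.lcm_dvd (dvd_mul_right d r) (dvd_mul_left r d)
    have h2 : L ≤ d * r := Nat.le_of_dvd (by positivity) h1
    have h3 : d ≤ x0 := Nat.le_of_dvd (by omega) hx0d
    calc L ≤ d * r := h2
      _ ≤ x0 * r := Nat.mul_le_mul_right r h3
      _ = r * x0 := by ring
  exact final_arith q r l m (Ncount q n r l) (Ncount q n r m) L x0 n k
    (delta q n r l (Ncount q n r l / 2 + 1)) hq2 hr hrq hl hm2l (by omega) hkdef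
    hn_eq hLS hLrx0 hx01 hLpos hdelta
end

section
/- Suppose nr = (q^m−1)/s for positive integers m and s, and suppose {l_i : i ∈ Z_{n,r}} = {l, m} for a positive integer l with l < m and l ∣ m. If N_l = 1 and 2m(q−1) ≥ q·l·r, then 2(q−1)·δ^{(l)}_1 > q·N_m·r. -/
open scoped Classical

namespace CycAux

/-- The canonical representative of `a` in `{1,…,N}`. -/
def rep (N a : ℕ) : ℕ := (a - 1) % N + 1

lemma rep_modEq {N : ℕ} (a : ℕ) (ha : 1 ≤ a) : rep N a ≡ a [MOD N] := by
  have h1 : (a - 1) % N ≡ a - 1 [MOD N] := Nat.mod_modEq _ _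
  have h2 : rep N a ≡ (a - 1) + 1 [MOD N] := Nat.ModEq.add_right 1 h1
  simpa [Nat.sub_add_cancel ha] using h2

lemma rep_mem_Icc {N : ℕ} (hN : 0 < N) (a : ℕ) : rep N a ∈ Finset.Icc 1 N := by
  have := Nat.mod_lt (a - 1) hN
  simp only [rep, Finset.mem_Icc]
  omega

lemma eq_of_modEq_Icc {N x y : ℕ} (hx : x ∈ Finset.Icc 1 N) (hy : y ∈ Finset.Icc 1 N)
    (h : x ≡ y [MOD N]) : x = y := by
  simp only [Finset.mem_Icc] at hx hy
  have h' : x - 1 ≡ y - 1 [MOD N] := by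
    refine Nat.ModEq.add_right_cancel' 1 ?_
    simpa [Nat.sub_add_cancel hx.1, Nat.sub_add_cancel hy.1] using h
  have h'' : (x - 1) % N = (y - 1) % N := h'
  rw [Nat.mod_eq_of_lt (by omega), Nat.mod_eq_of_lt (by omega)] at h''
  omega

lemma pow_cycle {q N i t : ℕ} (ht : i * q ^ t ≡ i [MOD N]) (j : ℕ) :
    i * q ^ j ≡ i * q ^ (j % t) [MOD N] := by
  have aux : ∀ u, i * q ^ (t * u) ≡ i [MOD N] := by
    intro u
    induction u with
    | zero => simpa using Nat.ModEq.refl i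
    | succ u ih =>
      have : i * q ^ (t * (u + 1)) = (i * q ^ (t * u)) * q ^ t := by
        rw [mul_assoc, ← pow_add]; ring_nf
      rw [this]
      calc (i * q ^ (t * u)) * q ^ t ≡ i * q ^ t [MOD N] := ih.mul_right _
        _ ≡ i [MOD N] := ht
  have hdm : t * (j / t) + j % t = j := Nat.div_add_mod j t
  calc i * q ^ j = (i * q ^ (t * (j / t))) * q ^ (j % t) := by
        rw [mul_assoc, ← pow_add, hdm]
    _ ≡ i * q ^ (j % t) [MOD N] := (aux _).mul_right _

lemma cancel_pow {q N i a b : ℕ} (hco : Nat.Coprime q N) (hab : a ≤ b)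
    (h : i * q ^ a ≡ i * q ^ b [MOD N]) : i * q ^ (b - a) ≡ i [MOD N] := by
  have hb : i * q ^ b = (i * q ^ (b - a)) * q ^ a := by
    rw [mul_assoc, ← pow_add]
    congr 2
    omega
  rw [hb, show i * q ^ a = i * q ^ a from rfl] at h
  have := Nat.ModEq.cancel_right_of_coprime (c := q ^ a) (by
    have : Nat.Coprime (q ^ a) N := hco.pow_left a
    simpa [Nat.Coprime, Nat.gcd_comm] using this) h
  exact this.symm

/-- The cardinality of a cyclotomic coset equals the minimal period. -/
lemma card_cosetOf {q N i t : ℕ} (hN : 0 < N) (hq : 0 < q) (hco : Nat.Coprime q N)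
    (hi : i ∈ Finset.Icc 1 N) (ht0 : 0 < t) (htEq : i * q ^ t ≡ i [MOD N])
    (htmin : ∀ u, 0 < u → i * q ^ u ≡ i [MOD N] → t ≤ u) :
    (cosetOf q N i).card = t := by
  have hi1 : 1 ≤ i := (Finset.mem_Icc.mp hi).1
  have hpos : ∀ j : ℕ, 1 ≤ i * q ^ j := fun j =>
    Nat.one_le_iff_ne_zero.mpr (by positivity)
  have himg : cosetOf q N i = (Finset.range t).image (fun j => rep N (i * q ^ j)) := by
    ext x
    simp only [cosetOf, Finset.mem_filter, Finset.mem_Icc, Finset.mem_image, Finset.mem_range]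
    constructor
    · rintro ⟨⟨hx1, hxN⟩, j, hj⟩
      refine ⟨j % t, Nat.mod_lt _ ht0, ?_⟩
      have h2 : x ≡ i * q ^ (j % t) [MOD N] := hj.trans (pow_cycle htEq j)
      have h3 : x ≡ rep N (i * q ^ (j % t)) [MOD N] :=
        h2.trans (rep_modEq _ (hpos _)).symm
      exact (eq_of_modEq_Icc (Finset.mem_Icc.mpr ⟨hx1, hxN⟩) (rep_mem_Icc hN _) h3).symm
    · rintro ⟨j, hj, rfl⟩
      have hb := Finset.mem_Icc.mp (rep_mem_Icc hN (i * q ^ j))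
      exact ⟨hb, j, rep_modEq _ (hpos j)⟩
  rw [himg, Finset.card_image_of_injOn, Finset.card_range]
  intro a ha b hb hab
  simp only [Finset.coe_range, Set.mem_Iio] at ha hb
  have h1 : i * q ^ a ≡ i * q ^ b [MOD N] :=
    ((rep_modEq _ (hpos a)).symm.trans (by dsimp only at hab; rw [hab])).trans (rep_modEq _ (hpos b))
  by_contra hne
  rcases Nat.lt_or_ge a b with hlt | hge
  · have := cancel_pow hco (le_of_lt hlt) h1
    have := htmin _ (by omega) this
    omega
  · have hlt' : b < a := by omega
    have := cancel_pow hco (le_of_lt hlt') h1.symm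
    have := htmin _ (by omega) this
    omega

/-- Specification of the coset cardinality: it is a positive period dividing all periods. -/
lemma cosetOf_card_spec {q N i m : ℕ} (hN : 0 < N) (hq : 0 < q) (hco : Nat.Coprime q N)
    (hi : i ∈ Finset.Icc 1 N) (hm : 0 < m) (hqm : q ^ m ≡ 1 [MOD N]) :
    0 < (cosetOf q N i).card ∧ i * q ^ (cosetOf q N i).card ≡ i [MOD N] ∧
      ∀ u, 0 < u → i * q ^ u ≡ i [MOD N] → (cosetOf q N i).card ∣ u := by
  have hex : ∃ t, 0 < t ∧ i * q ^ t ≡ i [MOD N] :=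
    ⟨m, hm, by calc i * q ^ m ≡ i * 1 [MOD N] := hqm.mul_left i
      _ = i := mul_one i⟩
  classical
  obtain ⟨t, ht0, htEq, htmin⟩ : ∃ t, 0 < t ∧ i * q ^ t ≡ i [MOD N] ∧
      ∀ u, 0 < u → i * q ^ u ≡ i [MOD N] → t ≤ u :=
    ⟨Nat.find hex, (Nat.find_spec hex).1, (Nat.find_spec hex).2,
      fun u hu hmod => Nat.find_min' hex ⟨hu, hmod⟩⟩
  have hcard : (cosetOf q N i).card = t := card_cosetOf hN hq hco hi ht0 htEq htmin
  refine ⟨hcard ▸ ht0, hcard ▸ htEq, ?_⟩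
  intro u hu hmod
  rw [hcard]
  have h1 : i * q ^ u ≡ i * q ^ (u % t) [MOD N] := pow_cycle htEq u
  have h2 : i * q ^ (u % t) ≡ i [MOD N] := h1.symm.trans hmod
  by_contra hndvd
  have hmodpos : 0 < u % t := by
    rcases Nat.eq_zero_or_pos (u % t) with h | h
    · exact absurd (Nat.dvd_iff_mod_eq_zero.mpr h) hndvd
    · exact h
  have hge := htmin _ hmodpos h2
  have hlt : u % t < t := Nat.mod_lt u ht0
  omega

lemma rel_symm {q N m x y : ℕ} (hm : 0 < m) (hqm : q ^ m ≡ 1 [MOD N])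
    (h : ∃ j, x ≡ y * q ^ j [MOD N]) : ∃ k, y ≡ x * q ^ k [MOD N] := by
  obtain ⟨j, hj⟩ := h
  refine ⟨m * (j + 1) - j, ?_⟩
  have hle : j ≤ m * (j + 1) := by nlinarith
  have h1 : x * q ^ (m * (j + 1) - j) ≡ (y * q ^ j) * q ^ (m * (j + 1) - j) [MOD N] :=
    hj.mul_right _
  have h2 : (y * q ^ j) * q ^ (m * (j + 1) - j) = y * (q ^ m) ^ (j + 1) := by
    rw [mul_assoc, ← pow_add, ← pow_mul]
    congr 2
    omega
  have h3 : y * (q ^ m) ^ (j + 1) ≡ y * 1 [MOD N] :=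
    Nat.ModEq.mul_left y (by simpa using hqm.pow (j + 1))
  have := h1.trans (h2 ▸ h3)
  simpa using this.symm

lemma rel_trans {q N x y z : ℕ} (h1 : ∃ j, x ≡ y * q ^ j [MOD N])
    (h2 : ∃ j, y ≡ z * q ^ j [MOD N]) : ∃ j, x ≡ z * q ^ j [MOD N] := by
  obtain ⟨j1, hj1⟩ := h1
  obtain ⟨j2, hj2⟩ := h2
  refine ⟨j2 + j1, ?_⟩
  calc x ≡ y * q ^ j1 [MOD N] := hj1
    _ ≡ (z * q ^ j2) * q ^ j1 [MOD N] := hj2.mul_right _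
    _ = z * q ^ (j2 + j1) := by rw [mul_assoc, ← pow_add]

lemma cosetOf_eq_of_mem {q N m a b y : ℕ} (hm : 0 < m) (hqm : q ^ m ≡ 1 [MOD N])
    (hya : y ∈ cosetOf q N a) (hyb : y ∈ cosetOf q N b) : cosetOf q N a = cosetOf q N b := by
  simp only [cosetOf, Finset.mem_filter] at hya hyb
  have hay : ∃ k, a ≡ y * q ^ k [MOD N] := rel_symm hm hqm hya.2
  have hby : ∃ k, b ≡ y * q ^ k [MOD N] := rel_symm hm hqm hyb.2
  have hab : ∃ k, a ≡ b * q ^ k [MOD N] := rel_trans hay hyb.2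
  have hba : ∃ k, b ≡ a * q ^ k [MOD N] := rel_trans hby hya.2
  ext x
  simp only [cosetOf, Finset.mem_filter]
  constructor
  · rintro ⟨hbnd, hx⟩
    exact ⟨hbnd, rel_trans hx hab⟩
  · rintro ⟨hbnd, hx⟩
    exact ⟨hbnd, rel_trans hx hba⟩


lemma mem_Zset_iff {n r x : ℕ} (hn : 0 < n) (hr : 0 < r) :
    x ∈ Zset n r ↔ 1 ≤ x ∧ x ≤ n * r ∧ x ≡ 1 [MOD r] := by
  simp only [Zset, Finset.mem_image, Finset.mem_range]
  constructor
  · rintro ⟨i, hi, rfl⟩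
    refine ⟨by omega, by nlinarith, ?_⟩
    show (1 + i * r) % r = 1 % r
    simp [Nat.add_mul_mod_self_right]
  · rintro ⟨h1, h2, h3⟩
    have hdvd : r ∣ x - 1 := (Nat.modEq_iff_dvd' h1).mp h3.symm
    obtain ⟨i, hi⟩ := hdvd
    refine ⟨i, ?_, ?_⟩
    · by_contra hge
      push_neg at hge
      have h5 : r * n ≤ r * i := Nat.mul_le_mul_left r hge
      have hx' : x = r * i + 1 := by omega
      have hcomm : n * r = r * n := Nat.mul_comm n r
      omega
    · have : x = 1 + r * i := by omega
      rw [this, mul_comm]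

lemma card_Zset {n r : ℕ} (hr : 0 < r) : (Zset n r).card = n := by
  rw [Zset, Finset.card_image_of_injective _ ?_, Finset.card_range]
  intro a b hab
  simp only [add_right_inj] at hab
  exact Nat.eq_of_mul_eq_mul_right hr hab

lemma q_modEq_one {q r : ℕ} (hq1 : 1 ≤ q) (hrdvd : r ∣ q - 1) : q ≡ 1 [MOD r] :=
  ((Nat.modEq_iff_dvd' hq1).mpr hrdvd).symm

lemma cosetOf_subset_Zset {q n r i : ℕ} (hn : 0 < n) (hr : 0 < r) (hq1 : 1 ≤ q)
    (hrdvd : r ∣ q - 1) (hi : i ∈ Zset n r) : cosetOf q (n * r) i ⊆ Zset n r := by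
  intro x hx
  simp only [cosetOf, Finset.mem_filter, Finset.mem_Icc] at hx
  obtain ⟨⟨hx1, hxN⟩, j, hj⟩ := hx
  have hi1 : i ≡ 1 [MOD r] := ((mem_Zset_iff hn hr).mp hi).2.2
  have hq1r : q ≡ 1 [MOD r] := q_modEq_one hq1 hrdvd
  have hxr : x ≡ i * q ^ j [MOD r] := hj.of_dvd (dvd_mul_left r n)
  have h2 : i * q ^ j ≡ 1 * 1 ^ j [MOD r] := hi1.mul (hq1r.pow j)
  rw [mem_Zset_iff hn hr]
  exact ⟨hx1, hxN, hxr.trans (by simpa using h2)⟩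

lemma self_mem_cosetOf {q N x : ℕ} (hx : x ∈ Finset.Icc 1 N) : x ∈ cosetOf q N x := by
  simp only [cosetOf, Finset.mem_filter]
  exact ⟨hx, 0, by simpa using Nat.ModEq.refl x⟩

end CycAux

theorem stmt6 (q n r m s l : ℕ) (hq : IsPrimePow q) (hn : 0 < n) (hco : Nat.Coprime n q)
    (hr : 0 < r) (hrdvd : r ∣ q - 1) (hm : 0 < m) (hs : 0 < s)
    (hnrs : n * r * s = q ^ m - 1)
    (hl : 0 < l) (hlm : l < m) (hldvd : l ∣ m)
    (hset : (Zset n r).image (fun i => (cosetOf q (n * r) i).card) = {l, m})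
    (hNl : Ncount q n r l = 1) (hcond : q * l * r ≤ 2 * m * (q - 1)) :
    q * Ncount q n r m * r < 2 * (q - 1) * delta q n r l 1 := by
  classical
  open CycAux in
  have hq2 : 2 ≤ q := hq.two_le
  have hq0 : 0 < q := by omega
  have hN : 0 < n * r := Nat.mul_pos hn hr
  have hqq1 : Nat.Coprime q (q - 1) := by
    have h1 := Nat.gcd_dvd_left q (q - 1)
    have h2 := Nat.gcd_dvd_right q (q - 1)
    have h3 := Nat.dvd_sub h1 h2
    exact Nat.eq_one_of_dvd_one (by simpa [Nat.sub_sub_self (by omega : 1 ≤ q)] using h3)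
  have hqr : Nat.Coprime q r := hqq1.coprime_dvd_right hrdvd
  have hcoQ : Nat.Coprime q (n * r) := Nat.Coprime.mul_right hco.symm hqr
  have hqm1 : q ^ m ≡ 1 [MOD n * r] := by
    have hdvd : n * r ∣ q ^ m - 1 := ⟨s, hnrs.symm⟩
    have h1 : 1 ≤ q ^ m := Nat.one_le_pow _ _ hq0
    exact ((Nat.modEq_iff_dvd' h1).mpr hdvd).symm
  -- the unique coset of size l
  obtain ⟨C, hCeq⟩ := Finset.card_eq_one.mp hNl
  have hCfil : C ∈ (cosetsIn q n r).filter (fun C => C.card = l) := by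
    rw [hCeq]; exact Finset.mem_singleton_self C
  have hCmem := Finset.mem_filter.mp hCfil
  obtain ⟨i0, hi0Z, hCdef⟩ := Finset.mem_image.mp hCmem.1
  have hCsub : C ⊆ Zset n r := hCdef ▸ CycAux.cosetOf_subset_Zset hn hr (by omega) hrdvd hi0Z
  have hCne : (C : Set ℕ).Nonempty := by
    have : 0 < C.card := hCmem.2 ▸ hl
    obtain ⟨x, hx⟩ := Finset.card_pos.mp this
    exact ⟨x, by simpa using hx⟩
  set δ := leader C with hδdef
  have hδC : δ ∈ C := by
    have := Nat.sInf_mem hCne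
    simpa [leader, hδdef] using this
  have hdelta : delta q n r l 1 = δ := by
    simp only [delta, leaderList, hCeq, Finset.image_singleton, Finset.sort_singleton]
    rfl
  have hδZ : δ ∈ Zset n r := hCsub hδC
  have hδIcc : δ ∈ Finset.Icc 1 (n * r) := by
    have := hCdef ▸ hδC
    simp only [cosetOf, Finset.mem_filter] at this
    exact this.1
  have hδ1 : 1 ≤ δ := (Finset.mem_Icc.mp hδIcc).1
  have hδr : δ ≡ 1 [MOD r] := ((CycAux.mem_Zset_iff hn hr).mp hδZ).2.2
  -- the coset has minimal period l at i0, hence δ q^l ≡ δ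
  have hi0Icc : i0 ∈ Finset.Icc 1 (n * r) := by
    have := (CycAux.mem_Zset_iff hn hr).mp hi0Z
    exact Finset.mem_Icc.mpr ⟨this.1, this.2.1⟩
  have hspec0 := CycAux.cosetOf_card_spec hN hq0 hcoQ hi0Icc hm hqm1
  have hcardi0 : (cosetOf q (n * r) i0).card = l := by rw [hCdef]; exact hCmem.2
  have hi0l : i0 * q ^ l ≡ i0 [MOD n * r] := by
    have := hspec0.2.1
    rwa [hcardi0] at this
  have hδq : δ * q ^ l ≡ δ [MOD n * r] := by
    have hδmem := hCdef ▸ hδC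
    simp only [cosetOf, Finset.mem_filter] at hδmem
    obtain ⟨_, j, hj⟩ := hδmem
    calc δ * q ^ l ≡ (i0 * q ^ j) * q ^ l [MOD n * r] := hj.mul_right _
      _ = (i0 * q ^ l) * q ^ j := by ring
      _ ≡ i0 * q ^ j [MOD n * r] := hi0l.mul_right _
      _ ≡ δ [MOD n * r] := hj.symm
  have hql1 : 1 ≤ q ^ l := Nat.one_le_pow _ _ hq0
  have hdvdN : n * r ∣ δ * (q ^ l - 1) := by
    have hle : δ ≤ δ * q ^ l := Nat.le_mul_of_pos_right δ (by omega)
    have h1 : n * r ∣ δ * q ^ l - δ := (Nat.modEq_iff_dvd' hle).mp hδq.symm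
    have h2 : δ * q ^ l - δ = δ * (q ^ l - 1) := by
      rw [Nat.mul_sub, mul_one]
    rwa [h2] at h1
  -- gcd analysis
  set g := Nat.gcd (n * r) (q ^ l - 1) with hgdef
  have hg0 : 0 < g := Nat.gcd_pos_of_pos_left _ hN
  set d := (n * r) / g with hddef
  have hgN : g ∣ n * r := Nat.gcd_dvd_left _ _
  have hgQ : g ∣ q ^ l - 1 := Nat.gcd_dvd_right _ _
  have hdg : d * g = n * r := Nat.div_mul_cancel hgN
  have hd0 : 0 < d := by
    rcases Nat.eq_zero_or_pos d with h | h
    · rw [h, zero_mul] at hdg; omega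
    · exact h
  obtain ⟨e, he⟩ := hgQ
  have hddvdδ : d ∣ δ := by
    have hde : Nat.Coprime d e := by
      have := Nat.coprime_div_gcd_div_gcd (m := n * r) (n := q ^ l - 1) hg0
      rw [← hgdef, ← hddef] at this
      have heeq : (q ^ l - 1) / g = e := by rw [he]; exact Nat.mul_div_cancel_left e hg0
      rwa [heeq] at this
    have h1 : d * g ∣ δ * (g * e) := by rw [hdg, ← he]; exact hdvdN
    have h2 : d ∣ δ * e := by
      have h3 : (d * g) ∣ (δ * e) * g := by
        have : δ * (g * e) = (δ * e) * g := by ring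
        rwa [this] at h1
      exact (Nat.mul_dvd_mul_iff_right hg0).mp h3
    exact hde.dvd_of_dvd_mul_right h2
  have hrql : r ∣ q ^ l - 1 := by
    have h1 : q ^ l ≡ 1 [MOD r] := by
      have := (CycAux.q_modEq_one (by omega) hrdvd).pow l
      simpa using this
    exact (Nat.modEq_iff_dvd' hql1).mp h1.symm
  have hrg : r ∣ g := Nat.dvd_gcd (dvd_mul_left r n) hrql
  have hgrr : g / r * r = g := Nat.div_mul_cancel hrg
  have hNgr : g / r * (d * r) = n * r := by
    calc g / r * (d * r) = d * (g / r * r) := by ring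
      _ = d * g := by rw [hgrr]
      _ = n * r := hdg
  -- the set S of solutions
  set S := (Finset.Icc 1 (n * r)).filter
    (fun x => x ≡ 1 [MOD r] ∧ n * r ∣ x * (q ^ l - 1)) with hSdef
  have hSsubC : S ⊆ C := by
    intro x hx
    simp only [hSdef, Finset.mem_filter] at hx
    obtain ⟨hxIcc, hx1r, hxdvd⟩ := hx
    have hx1 : 1 ≤ x := (Finset.mem_Icc.mp hxIcc).1
    have hxq : x * q ^ l ≡ x [MOD n * r] := by
      have hle : x ≤ x * q ^ l := Nat.le_mul_of_pos_right x (by omega)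
      have h2 : x * q ^ l - x = x * (q ^ l - 1) := by rw [Nat.mul_sub, mul_one]
      exact ((Nat.modEq_iff_dvd' hle).mpr (h2 ▸ hxdvd)).symm
    have hxZ : x ∈ Zset n r := by
      rw [CycAux.mem_Zset_iff hn hr]
      exact ⟨hx1, (Finset.mem_Icc.mp hxIcc).2, hx1r⟩
    have hspecx := CycAux.cosetOf_card_spec hN hq0 hcoQ hxIcc hm hqm1
    have hdvdl : (cosetOf q (n * r) x).card ∣ l := hspecx.2.2 l hl hxq
    have hcardlm : (cosetOf q (n * r) x).card = l ∨ (cosetOf q (n * r) x).card = m := by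
      have hmem : (cosetOf q (n * r) x).card ∈
          (Zset n r).image (fun i => (cosetOf q (n * r) i).card) :=
        Finset.mem_image_of_mem _ hxZ
      rw [hset] at hmem
      simpa using hmem
    have hcardl : (cosetOf q (n * r) x).card = l := by
      rcases hcardlm with h | h
      · exact h
      · exfalso
        rw [h] at hdvdl
        have := Nat.le_of_dvd hl hdvdl
        omega
    have hcosx : cosetOf q (n * r) x ∈ (cosetsIn q n r).filter (fun C => C.card = l) := by
      rw [Finset.mem_filter]
      exact ⟨Finset.mem_image_of_mem _ hxZ, hcardl⟩
    rw [hCeq, Finset.mem_singleton] at hcosx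
    rw [← hcosx]
    exact CycAux.self_mem_cosetOf hxIcc
  have hScard : S.card ≤ l := hCmem.2 ▸ Finset.card_le_card hSsubC
  -- injection from range (g/r) into S
  have hinj : g / r ≤ S.card := by
    have := Finset.card_le_card_of_injOn (s := Finset.range (g / r)) (t := S)
      (fun k => CycAux.rep (n * r) (δ + k * (d * r))) ?_ ?_
    · simpa using this
    · intro k hk
      simp only [Finset.mem_coe, Finset.mem_range] at hk ⊢
      have hpos : 1 ≤ δ + k * (d * r) := by omega
      have hxmod : CycAux.rep (n * r) (δ + k * (d * r)) ≡ δ + k * (d * r) [MOD n * r] :=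
        CycAux.rep_modEq _ hpos
      have hxIcc := CycAux.rep_mem_Icc hN (δ + k * (d * r))
      simp only [hSdef, Finset.mem_filter]
      refine ⟨hxIcc, ?_, ?_⟩
      · have h1 : CycAux.rep (n * r) (δ + k * (d * r)) ≡ δ + k * (d * r) [MOD r] :=
          hxmod.of_dvd (dvd_mul_left r n)
        have h2 : δ + k * (d * r) ≡ δ + 0 [MOD r] :=
          Nat.ModEq.add_left δ (Nat.modEq_zero_iff_dvd.mpr ⟨k * d, by ring⟩)
        have h3 := (h1.trans h2).trans (by simpa using hδr)
        simpa using h3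
      · have hdx : d ∣ CycAux.rep (n * r) (δ + k * (d * r)) := by
          have h1 : CycAux.rep (n * r) (δ + k * (d * r)) ≡ δ + k * (d * r) [MOD d] :=
            hxmod.of_dvd ⟨g, hdg.symm⟩
          have h2 : d ∣ δ + k * (d * r) := dvd_add hddvdδ ⟨k * r, by ring⟩
          have h3 : δ + k * (d * r) ≡ 0 [MOD d] := Nat.modEq_zero_iff_dvd.mpr h2
          exact Nat.modEq_zero_iff_dvd.mp (h1.trans h3)
        obtain ⟨c, hc⟩ := hdx
        rw [hc, ← hdg, he]
        exact ⟨c * e, by ring⟩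
    · intro k1 hk1 k2 hk2 heq
      dsimp only at heq
      simp only [Finset.coe_range, Set.mem_Iio] at hk1 hk2
      have h1 : δ + k1 * (d * r) ≡ δ + k2 * (d * r) [MOD n * r] :=
        ((CycAux.rep_modEq _ (by omega)).symm.trans (by rw [heq])).trans
          (CycAux.rep_modEq _ (by omega))
      have h2 : k1 * (d * r) ≡ k2 * (d * r) [MOD n * r] :=
        Nat.ModEq.add_left_cancel' δ h1
      have hdr0 : 0 < d * r := Nat.mul_pos hd0 hr
      have hb1 : k1 * (d * r) < n * r := by
        calc k1 * (d * r) < g / r * (d * r) := by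
              exact Nat.mul_lt_mul_of_lt_of_le hk1 (le_refl _) hdr0
          _ = n * r := hNgr
      have hb2 : k2 * (d * r) < n * r := by
        calc k2 * (d * r) < g / r * (d * r) := by
              exact Nat.mul_lt_mul_of_lt_of_le hk2 (le_refl _) hdr0
          _ = n * r := hNgr
      have h3 : k1 * (d * r) = k2 * (d * r) := by
        have := h2
        unfold Nat.ModEq at this
        rwa [Nat.mod_eq_of_lt hb1, Nat.mod_eq_of_lt hb2] at this
      exact Nat.eq_of_mul_eq_mul_right hdr0 h3
  have hgle : g ≤ l * r := by
    have h1 : g / r ≤ l := le_trans hinj hScard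
    calc g = g / r * r := hgrr.symm
      _ ≤ l * r := Nat.mul_le_mul_right r h1
  -- δ * l ≥ n
  have hnδl : n ≤ δ * l := by
    have h1 : d ≤ δ := Nat.le_of_dvd (by omega) hddvdδ
    have h2 : n * r ≤ δ * g := by
      calc n * r = d * g := hdg.symm
        _ ≤ δ * g := Nat.mul_le_mul_right g h1
    have h3 : δ * g ≤ δ * (l * r) := Nat.mul_le_mul_left δ hgle
    have h4 : n * r ≤ (δ * l) * r := by
      calc n * r ≤ δ * (l * r) := le_trans h2 h3
        _ = (δ * l) * r := by ring
    exact Nat.le_of_mul_le_mul_right h4 hr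
  -- counting: l + m * N_m ≤ n
  have hcount : l + m * Ncount q n r m ≤ n := by
    have hdisj : ∀ C1 ∈ cosetsIn q n r, ∀ C2 ∈ cosetsIn q n r, C1 ≠ C2 →
        Disjoint (id C1) (id C2) := by
      intro C1 hC1 C2 hC2 hne
      by_contra hnd
      obtain ⟨y, hy1, hy2⟩ := Finset.not_disjoint_iff.mp hnd
      obtain ⟨a, _, ha⟩ := Finset.mem_image.mp hC1
      obtain ⟨b, _, hb⟩ := Finset.mem_image.mp hC2
      apply hne
      rw [← ha, ← hb]
      exact CycAux.cosetOf_eq_of_mem hm hqm1 (ha ▸ hy1) (hb ▸ hy2)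
    have hsum : ∑ C ∈ cosetsIn q n r, C.card ≤ n := by
      have hb := Finset.card_biUnion hdisj
      simp only [id] at hb
      rw [← hb]
      calc ((cosetsIn q n r).biUnion id).card ≤ (Zset n r).card := by
            apply Finset.card_le_card
            intro x hx
            obtain ⟨C', hC', hxC'⟩ := Finset.mem_biUnion.mp hx
            obtain ⟨a, haZ, ha⟩ := Finset.mem_image.mp hC'
            exact CycAux.cosetOf_subset_Zset hn hr (by omega) hrdvd haZ (ha ▸ hxC')
        _ = n := CycAux.card_Zset hr
    have hcards : ∀ C' ∈ cosetsIn q n r, C'.card = l ∨ C'.card = m := by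
      intro C' hC'
      obtain ⟨a, haZ, ha⟩ := Finset.mem_image.mp hC'
      have hmem : C'.card ∈ (Zset n r).image (fun i => (cosetOf q (n * r) i).card) := by
        rw [← ha]
        exact Finset.mem_image_of_mem _ haZ
      rw [hset] at hmem
      simpa using hmem
    have hsplit := Finset.sum_filter_add_sum_filter_not (cosetsIn q n r)
      (fun C => C.card = l) (fun C => C.card)
    have h1 : ∑ C ∈ (cosetsIn q n r).filter (fun C => C.card = l), C.card = l := by
      rw [hCeq, Finset.sum_singleton, hCmem.2]
    have hfeq : (cosetsIn q n r).filter (fun C => ¬ C.card = l) =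
        (cosetsIn q n r).filter (fun C => C.card = m) := by
      apply Finset.filter_congr
      intro C' hC'
      rcases hcards C' hC' with h | h <;> simp [h] <;> omega
    have h2 : ∑ C ∈ (cosetsIn q n r).filter (fun C => ¬ C.card = l), C.card
        = m * Ncount q n r m := by
      rw [hfeq]
      rw [Finset.sum_congr rfl (fun C hC => (Finset.mem_filter.mp hC).2)]
      rw [Finset.sum_const, smul_eq_mul, Ncount, mul_comm]
    omega
  -- final arithmetic
  set Nm := Ncount q n r m with hNm
  rw [hdelta]
  have hmNm : m * Nm < n := by omega
  have hpos1 : 0 < q * l * r := by positivity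
  have key : (q * Nm * r) * (l * m) < (2 * (q - 1) * δ) * (l * m) := by
    calc (q * Nm * r) * (l * m) = (q * l * r) * (m * Nm) := by ring
      _ < (q * l * r) * n := by exact mul_lt_mul_of_pos_left hmNm hpos1
      _ ≤ (2 * m * (q - 1)) * n := mul_le_mul_left hcond n
      _ ≤ (2 * m * (q - 1)) * (δ * l) := mul_le_mul_right hnδl _
      _ = (2 * (q - 1) * δ) * (l * m) := by ring
  have hlm0 : 0 < l * m := Nat.mul_pos hl hm
  exact lt_of_mul_lt_mul_right key (le_of_lt hlm0)
end
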